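/- Let k, v be integers with 16 ≤ k ≤ v, and let θ = F(β) with β = (−5/k, 14/k², 0). Then: (1) E(x^{(j)}; θ) − E(x; θ) ≥ 1 for every edge representation x ∈ C_{v,k} of a k-clique graph and every j ∈ {1,…,n}; and (2) if moreover k = c·v for a constant c ∈ (0,1], then ‖θ‖² ≤ (196·c⁻⁴ + 50·c⁻²)·v, where ‖θ‖² = ‖W‖_F² + ‖b‖². -/

import Mathlib

open scoped BigOperators
open scoped Classical
open Matrix MeasureTheory

namespace HopfieldPaper

/-- The space of (not necessarily admissible) Hopfield parameters `θ = (W, b)`. -/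
abbrev Param (n : ℕ) := Matrix (Fin n) (Fin n) ℝ × (Fin n → ℝ)

variable {n : ℕ}

/-- `θ = (W, b)` is a Hopfield parameter: `W` is symmetric with zero diagonal. -/
def IsHopfieldParam (θ : Param n) : Prop :=
  θ.1.IsSymm ∧ ∀ i, θ.1 i i = 0

/-- `x ∈ {0,1}ⁿ`. -/
def IsBinary (x : Fin n → ℝ) : Prop := ∀ i, x i = 0 ∨ x i = 1

/-- Energy `E(x; θ) = (1/2)·xᵀWx + bᵀx`. -/
noncomputable def energy (x : Fin n → ℝ) (θ : Param n) : ℝ :=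
  (1 / 2) * (∑ i, ∑ j, x i * θ.1 i j * x j) + ∑ j, θ.2 j * x j

/-- `x^{(j)}`: the vector differing from `x` exactly in coordinate `j`. -/
noncomputable def flip (x : Fin n → ℝ) (j : Fin n) : Fin n → ℝ :=
  Function.update x j (1 - x j)

/-- The inner product on parameter space.  Under the identification of
`θ = (W, b)` with `ω = (√2·a, b) ∈ ℝ^q` (`a` the strictly upper-triangular
entries of `W`), the Euclidean inner product on `ℝ^q` corresponds to
`⟨θ, η⟩ = Σᵢⱼ Wᵢⱼ·W'ᵢⱼ + Σⱼ bⱼ·b'ⱼ`; in particular `‖ω‖² = ‖W‖_F² + ‖b‖²`. -/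
noncomputable def pInner (θ η : Param n) : ℝ :=
  (∑ i, ∑ j, θ.1 i j * η.1 i j) + ∑ j, θ.2 j * η.2 j

/-- The norm on parameter space: `‖ω‖ = √(‖W‖_F² + ‖b‖²)`. -/
noncomputable def pNorm (θ : Param n) : ℝ := Real.sqrt (pInner θ θ)

/-- The representer `u_j(x)`: the unique element of parameter space with
`⟨u_j(x), θ⟩ = E(x^{(j)}; θ) − E(x; θ)` for every Hopfield parameter `θ`. -/
noncomputable def uvec (x : Fin n → ℝ) (j : Fin n) : Param n :=
  (Matrix.of fun i l =>
      if i = j ∧ l ≠ j then (1 - 2 * x j) * x l / 2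
      else if l = j ∧ i ≠ j then (1 - 2 * x j) * x i / 2
      else 0,
   fun l => if l = j then 1 - 2 * x j else 0)

/-- `‖x‖₀`: the number of nonzero coordinates. -/
noncomputable def l0norm (x : Fin n → ℝ) : ℕ :=
  (Finset.univ.filter fun i => x i ≠ 0).card

variable {v : ℕ}

/-- The type of unordered pairs of distinct elements of `Fin v`
(the "unordered pairs of `{1,…,v}`"). -/
abbrev EdgeIdx (v : ℕ) := {p : Sym2 (Fin v) // ¬ p.IsDiag}

/-- The permutation of `Sym2 (Fin v)` induced by a vertex permutation. -/
def sym2Perm (φ : Equiv.Perm (Fin v)) : Equiv.Perm (Sym2 (Fin v)) where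
  toFun := Sym2.map φ
  invFun := Sym2.map φ.symm
  left_inv := fun p => by rw [Sym2.map_map]; simp
  right_inv := fun p => by rw [Sym2.map_map]; simp

/-- The induced permutation of unordered pairs of distinct vertices. -/
def offDiagPerm (φ : Equiv.Perm (Fin v)) : Equiv.Perm (EdgeIdx v) :=
  (sym2Perm φ).subtypePerm (fun p => by
    simp only [sym2Perm, Equiv.coe_fn_mk]
    exact (Sym2.isDiag_map φ.injective).not)

/-- The edge permutation `π_φ` of `{1,…,n}` induced by the vertex permutation
`φ`; it satisfies `π_φ(Ind({a,b})) = Ind({φ(a),φ(b)})`. -/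
def edgePerm (Ind : EdgeIdx v ≃ Fin n) (φ : Equiv.Perm (Fin v)) :
    Equiv.Perm (Fin n) :=
  Ind.permCongr (offDiagPerm φ)

/-- `Φ_n`: the set of permutation matrices of vertex-induced edge permutations. -/
noncomputable def PhiSet (Ind : EdgeIdx v ≃ Fin n) :
    Set (Matrix (Fin n) (Fin n) ℝ) :=
  {P | ∃ φ : Equiv.Perm (Fin v), P = (edgePerm Ind φ).permMatrix ℝ}

/-- The two-element vertex set `Ind⁻¹(j)` of an edge index, as a `Finset`. -/
noncomputable def pairFinset (Ind : EdgeIdx v ≃ Fin n) (j : Fin n) : Finset (Fin v) :=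
  Finset.univ.filter (fun a => a ∈ (Ind.symm j : Sym2 (Fin v)))

/-- Edge adjacency: `j ∼ l` iff `|Ind⁻¹(j) ∩ Ind⁻¹(l)| = 1`. -/
noncomputable def edgeAdj (Ind : EdgeIdx v ≃ Fin n) (j l : Fin n) : Prop :=
  (pairFinset Ind j ∩ pairFinset Ind l).card = 1

/-- A permutation of edge indices preserves edge adjacency. -/
noncomputable def PreservesEdgeAdj (Ind : EdgeIdx v ≃ Fin n)
    (π : Equiv.Perm (Fin n)) : Prop :=
  ∀ j l : Fin n, edgeAdj Ind (π j) (π l) ↔ edgeAdj Ind j l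

/-- `Q_n`: the set of permutation matrices of edge-adjacency-preserving
permutations. -/
noncomputable def QSet (Ind : EdgeIdx v ≃ Fin n) :
    Set (Matrix (Fin n) (Fin n) ℝ) :=
  {Q | ∃ π : Equiv.Perm (Fin n), PreservesEdgeAdj Ind π ∧ Q = π.permMatrix ℝ}

/-- Orbit of a vector under a set of matrices: `Orb(x, Γ) = {P·x : P ∈ Γ}`. -/
noncomputable def morb (Γ : Set (Matrix (Fin n) (Fin n) ℝ)) (x : Fin n → ℝ) :
    Set (Fin n → ℝ) :=
  {y | ∃ P ∈ Γ, y = P.mulVec x}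

/-- The linear map `F : ℝ³ → Θ` sending `β` to `(W, b)` with `W_{ij} = 0` if
`i = j`, `W_{ij} = β₁` if `i ∼ j`, `W_{ij} = β₂` if `i ≠ j` and `i ≁ j`, and
`b_j = β₃`. -/
noncomputable def Fmap (Ind : EdgeIdx v ≃ Fin n) (β : ℝ × ℝ × ℝ) : Param n :=
  (Matrix.of fun i j =>
      if i = j then 0 else if edgeAdj Ind i j then β.1 else β.2.1,
   fun _ => β.2.2)

/-- The edge representation of the clique graph on the vertex set `K`. -/
noncomputable def cliqueRep (Ind : EdgeIdx v ≃ Fin n) (K : Finset (Fin v)) :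
    Fin n → ℝ :=
  fun j => if (∀ a ∈ (Ind.symm j : Sym2 (Fin v)), a ∈ K) then 1 else 0

/-- `C_{v,k}`: edge representations of `k`-clique graphs on `v` vertices. -/
noncomputable def CliqueReps (Ind : EdgeIdx v ≃ Fin n) (k : ℕ) :
    Set (Fin n → ℝ) :=
  {x | ∃ K : Finset (Fin v), K.card = k ∧ x = cliqueRep Ind K}


section Aux

variable {v n : ℕ} (Ind : EdgeIdx v ≃ Fin n)

lemma symm_inj {j l : Fin n}
    (h : (Ind.symm j : Sym2 (Fin v)) = (Ind.symm l : Sym2 (Fin v))) : j = l := by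
  have h2 : Ind.symm j = Ind.symm l := Subtype.ext h
  simpa using congrArg Ind h2

lemma exists_pair (j : Fin n) :
    ∃ a b : Fin v, a ≠ b ∧ (Ind.symm j : Sym2 (Fin v)) = s(a, b) := by
  obtain ⟨p, hp⟩ := Ind.symm j
  induction p using Sym2.ind with
  | _ a b =>
    refine ⟨a, b, ?_, rfl⟩
    rw [Sym2.mk_isDiag_iff] at hp
    exact hp

lemma pairFinset_eq {j : Fin n} {a b : Fin v}
    (h : (Ind.symm j : Sym2 (Fin v)) = s(a, b)) : pairFinset Ind j = {a, b} := by
  ext c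
  simp [pairFinset, h, Sym2.mem_iff]

/-- Build the edge index of a pair of distinct vertices. -/
noncomputable def mkE (a b : Fin v) (h : a ≠ b) : Fin n :=
  Ind ⟨s(a, b), by rw [Sym2.mk_isDiag_iff]; exact h⟩

lemma symm_mkE (a b : Fin v) (h : a ≠ b) :
    (Ind.symm (mkE Ind a b h) : Sym2 (Fin v)) = s(a, b) := by
  simp [mkE]

lemma pair_inter_card_one {a b s t : Fin v} (hs : s = a ∨ s = b)
    (hta : t ≠ a) (htb : t ≠ b) :
    (({a, b} ∩ {s, t} : Finset (Fin v))).card = 1 := by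
  have h : ({a, b} ∩ {s, t} : Finset (Fin v)) = {s} := by
    ext c
    simp only [Finset.mem_inter, Finset.mem_insert, Finset.mem_singleton]
    constructor
    · rintro ⟨h1, rfl | rfl⟩
      · rfl
      · rcases h1 with rfl | rfl
        · exact absurd rfl hta
        · exact absurd rfl htb
    · rintro rfl
      exact ⟨hs, Or.inl rfl⟩
  rw [h, Finset.card_singleton]

lemma edgeAdj_symm {j l : Fin n} (h : edgeAdj Ind j l) : edgeAdj Ind l j := by
  unfold edgeAdj at *
  rwa [Finset.inter_comm]

lemma edgeAdj_irrefl (j : Fin n) : ¬ edgeAdj Ind j j := by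
  obtain ⟨a, b, hab, hj⟩ := exists_pair Ind j
  unfold edgeAdj
  rw [pairFinset_eq Ind hj, Finset.inter_self]
  rw [Finset.card_insert_of_notMem (by simpa using hab), Finset.card_singleton]
  omega

/-- The set of edges inside a vertex set `K`. -/
noncomputable def cliqueSet (K : Finset (Fin v)) : Finset (Fin n) :=
  Finset.univ.filter (fun l => ∀ a ∈ (Ind.symm l : Sym2 (Fin v)), a ∈ K)

lemma mem_cliqueSet {K : Finset (Fin v)} {l : Fin n} :
    l ∈ cliqueSet Ind K ↔ ∀ a ∈ (Ind.symm l : Sym2 (Fin v)), a ∈ K := by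
  simp [cliqueSet]

lemma card_cliqueSet (K : Finset (Fin v)) :
    (cliqueSet Ind K).card = K.card.choose 2 := by
  classical
  rw [← Sym2.card_image_offDiag K]
  apply Finset.card_bij (fun l _ => (Ind.symm l : Sym2 (Fin v)))
  · intro l hl
    obtain ⟨a, b, hab, hl2⟩ := exists_pair Ind l
    rw [mem_cliqueSet] at hl
    rw [hl2]
    apply Finset.mem_image_of_mem (Function.uncurry Sym2.mk) (a := (a, b))
    rw [Finset.mem_offDiag]
    exact ⟨hl a (by rw [hl2]; simp), hl b (by rw [hl2]; simp), hab⟩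
  · intro l _ l' _ h
    exact symm_inj Ind h
  · intro p hp
    rw [Finset.mem_image] at hp
    obtain ⟨q, hq, rfl⟩ := hp
    rw [Finset.mem_offDiag] at hq
    refine ⟨Ind ⟨s(q.1, q.2), by rw [Sym2.mk_isDiag_iff]; exact hq.2.2⟩, ?_, by simp; rfl⟩
    rw [mem_cliqueSet]
    intro a ha
    simp only [Equiv.symm_apply_apply] at ha
    rw [Sym2.mem_iff] at ha
    rcases ha with rfl | rfl
    · exact hq.1
    · exact hq.2.1

lemma countA_low {K : Finset (Fin v)} {j : Fin n} {a b : Fin v} (hab : a ≠ b)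
    (hj : (Ind.symm j : Sym2 (Fin v)) = s(a, b)) (ha : a ∈ K) (hb : b ∈ K) :
    2 * (K.card - 2) ≤
      (((cliqueSet Ind K).erase j).filter (fun l => edgeAdj Ind j l)).card := by
  classical
  have hpj : pairFinset Ind j = {a, b} := pairFinset_eq Ind hj
  have hsub : ({a, b} : Finset (Fin v)) ⊆ K := by
    intro c hc
    rcases Finset.mem_insert.1 hc with rfl | hc
    · exact ha
    · rw [Finset.mem_singleton] at hc; subst hc; exact hb
  have hcard2 : ({a, b} : Finset (Fin v)).card = 2 := by
    rw [Finset.card_insert_of_notMem (by simpa using hab), Finset.card_singleton]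
  have hsrc : (({a, b} : Finset (Fin v)) ×ˢ (K \ {a, b})).card = 2 * (K.card - 2) := by
    rw [Finset.card_product, hcard2, Finset.card_sdiff_of_subset hsub, hcard2]
  rw [← hsrc]
  apply Finset.card_le_card_of_injOn
    (fun p => if h : p.1 ≠ p.2 then mkE Ind p.1 p.2 h else j)
  · rintro ⟨s, t⟩ hp
    rw [Finset.mem_coe, Finset.mem_product, Finset.mem_sdiff] at hp
    obtain ⟨hs, htK, htn⟩ := hp
    have hst : s ≠ t := fun h => htn (h ▸ hs)
    simp only [ne_eq, hst, not_false_iff, dif_pos]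
    have hspair : (Ind.symm (mkE Ind s t hst) : Sym2 (Fin v)) = s(s, t) := symm_mkE Ind s t hst
    have hsab : s = a ∨ s = b := by simpa using hs
    have hta : t ≠ a := fun h => htn (by simp [h])
    have htb : t ≠ b := fun h => htn (by simp [h])
    rw [Finset.mem_coe, Finset.mem_filter, Finset.mem_erase]
    refine ⟨⟨?_, ?_⟩, ?_⟩
    · intro h
      apply htn
      have : (s(s, t) : Sym2 (Fin v)) = s(a, b) := by rw [← hspair, h, hj]
      have ht : t ∈ (s(a, b) : Sym2 (Fin v)) := by rw [← this]; simp
      rw [Sym2.mem_iff] at ht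
      simp [ht]
    · rw [mem_cliqueSet]
      intro c hc
      rw [hspair, Sym2.mem_iff] at hc
      rcases hc with rfl | rfl
      · exact hsub hs
      · exact htK
    · unfold edgeAdj
      rw [hpj, pairFinset_eq Ind hspair]
      exact pair_inter_card_one hsab hta htb
  · rintro ⟨s, t⟩ hp ⟨s', t'⟩ hp' h
    simp only [Finset.coe_product, Set.mem_prod, Finset.mem_coe, Finset.mem_sdiff] at hp hp'
    have hs := hp.1
    have htn := hp.2.2
    have hs' := hp'.1
    have htn' := hp'.2.2
    have hst : s ≠ t := fun hh => htn (hh ▸ hs)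
    have hst' : s' ≠ t' := fun hh => htn' (hh ▸ hs')
    simp only [ne_eq, hst, hst', not_false_iff, dif_pos] at h
    have : (s(s, t) : Sym2 (Fin v)) = s(s', t') := by
      rw [← symm_mkE Ind s t hst, ← symm_mkE Ind s' t' hst', h]
    rw [Sym2.eq_iff] at this
    rcases this with ⟨rfl, rfl⟩ | ⟨rfl, rfl⟩
    · rfl
    · exact absurd hs htn'

lemma countA_up {K : Finset (Fin v)} {j : Fin n} {a b : Fin v} (hab : a ≠ b)
    (hj : (Ind.symm j : Sym2 (Fin v)) = s(a, b)) (ha : a ∈ K) (hb : b ∉ K) :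
    ((cliqueSet Ind K).filter (fun l => edgeAdj Ind j l)).card ≤ K.card - 1 := by
  classical
  have hpj : pairFinset Ind j = {a, b} := pairFinset_eq Ind hj
  have htgt : (K.erase a).card = K.card - 1 := Finset.card_erase_of_mem ha
  rw [← htgt]
  apply Finset.card_le_card_of_injOn
    (fun l => if h : a ∈ (Ind.symm l : Sym2 (Fin v)) then Sym2.Mem.other' h else a)
  · intro l hl
    rw [Finset.mem_coe, Finset.mem_filter, mem_cliqueSet] at hl
    obtain ⟨hlK, hadj⟩ := hl
    unfold edgeAdj at hadj
    rw [Finset.card_eq_one] at hadj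
    obtain ⟨c, hc⟩ := hadj
    have hcmem : c ∈ pairFinset Ind j ∩ pairFinset Ind l := by rw [hc]; simp
    rw [Finset.mem_inter, hpj] at hcmem
    obtain ⟨hcab, hcl⟩ := hcmem
    have hclmem : c ∈ (Ind.symm l : Sym2 (Fin v)) := by
      simpa [pairFinset] using hcl
    have hcK : c ∈ K := hlK c hclmem
    have hca : c = a := by
      rcases Finset.mem_insert.1 hcab with rfl | hcb
      · rfl
      · rw [Finset.mem_singleton] at hcb; subst hcb; exact absurd hcK hb
    subst hca
    simp only [hclmem, dif_pos]
    have hspec := Sym2.other_spec' hclmem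
    rw [Finset.mem_coe, Finset.mem_erase]
    constructor
    · intro h
      have : (Ind.symm l : Sym2 (Fin v)).IsDiag := by
        rw [← hspec, h, Sym2.mk_isDiag_iff]
      exact (Ind.symm l).2 this
    · exact hlK _ (Sym2.other_mem' hclmem)
  · intro l hl l' hl' h
    rw [Finset.mem_coe, Finset.mem_filter, mem_cliqueSet] at hl hl'
    -- recover membership of a
    have hmem : ∀ m : Fin n, m ∈ (cliqueSet Ind K).filter (fun l => edgeAdj Ind j l) →
        a ∈ (Ind.symm m : Sym2 (Fin v)) := by
      intro m hm
      rw [Finset.mem_filter, mem_cliqueSet] at hm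
      obtain ⟨hlK, hadj⟩ := hm
      unfold edgeAdj at hadj
      rw [Finset.card_eq_one] at hadj
      obtain ⟨c, hc⟩ := hadj
      have hcmem : c ∈ pairFinset Ind j ∩ pairFinset Ind m := by rw [hc]; simp
      rw [Finset.mem_inter, hpj] at hcmem
      obtain ⟨hcab, hcl⟩ := hcmem
      have hclmem : c ∈ (Ind.symm m : Sym2 (Fin v)) := by simpa [pairFinset] using hcl
      have hcK : c ∈ K := hlK c hclmem
      have hca : c = a := by
        rcases Finset.mem_insert.1 hcab with rfl | hcb
        · rfl
        · rw [Finset.mem_singleton] at hcb; subst hcb; exact absurd hcK hb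
      rwa [hca] at hclmem
    have h1 : a ∈ (Ind.symm l : Sym2 (Fin v)) := by
      apply hmem; rw [Finset.mem_filter, mem_cliqueSet]; exact hl
    have h2 : a ∈ (Ind.symm l' : Sym2 (Fin v)) := by
      apply hmem; rw [Finset.mem_filter, mem_cliqueSet]; exact hl'
    simp only [h1, h2, dif_pos] at h
    apply symm_inj Ind
    rw [← Sym2.other_spec' h1, ← Sym2.other_spec' h2, h]

lemma countA_zero {K : Finset (Fin v)} {j : Fin n} {a b : Fin v}
    (hj : (Ind.symm j : Sym2 (Fin v)) = s(a, b)) (ha : a ∉ K) (hb : b ∉ K) :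
    ((cliqueSet Ind K).filter (fun l => edgeAdj Ind j l)) = ∅ := by
  classical
  rw [Finset.eq_empty_iff_forall_notMem]
  intro l hl
  rw [Finset.mem_filter, mem_cliqueSet] at hl
  obtain ⟨hlK, hadj⟩ := hl
  unfold edgeAdj at hadj
  rw [Finset.card_eq_one] at hadj
  obtain ⟨c, hc⟩ := hadj
  have hcmem : c ∈ pairFinset Ind j ∩ pairFinset Ind l := by rw [hc]; simp
  rw [Finset.mem_inter, pairFinset_eq Ind hj] at hcmem
  obtain ⟨hcab, hcl⟩ := hcmem
  have hclmem : c ∈ (Ind.symm l : Sym2 (Fin v)) := by simpa [pairFinset] using hcl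
  have hcK : c ∈ K := hlK c hclmem
  rcases Finset.mem_insert.1 hcab with rfl | hcb
  · exact ha hcK
  · rw [Finset.mem_singleton] at hcb; subst hcb; exact hb hcK

lemma energy_flip_sub (θ : Param n) (hs : ∀ i l, θ.1 i l = θ.1 l i)
    (hdg : ∀ i, θ.1 i i = 0) (x : Fin n → ℝ) (j : Fin n) :
    energy (flip x j) θ - energy x θ
      = (1 - 2 * x j) * ((∑ l, θ.1 j l * x l) + θ.2 j) := by
  classical
  set d := 1 - 2 * x j with hd
  set e : Fin n → ℝ := fun i => if i = j then d else 0 with he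
  have hy : flip x j = fun i => x i + e i := by
    funext i
    by_cases h : i = j
    · subst h; simp [flip, e, d]; ring
    · simp [flip, Function.update_of_ne h, e, h]
  have expand : ∀ i l : Fin n,
      (x i + e i) * θ.1 i l * (x l + e l)
        = x i * θ.1 i l * x l + e i * θ.1 i l * x l + x i * θ.1 i l * e l
          + e i * θ.1 i l * e l := by intro i l; ring
  have hB : ∑ i, ∑ l, e i * θ.1 i l * x l = d * ∑ l, θ.1 j l * x l := by
    rw [Finset.sum_eq_single_of_mem j (Finset.mem_univ j)]
    · rw [Finset.mul_sum]
      apply Finset.sum_congr rfl; intro l _; simp [e]; ring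
    · intro i _ hij; simp [e, hij]
  have hC : ∑ i, ∑ l, x i * θ.1 i l * e l = d * ∑ l, θ.1 j l * x l := by
    have : ∀ i : Fin n, ∑ l, x i * θ.1 i l * e l = x i * θ.1 i j * d := by
      intro i
      rw [Finset.sum_eq_single_of_mem j (Finset.mem_univ j)]
      · simp [e]
      · intro l _ hlj; simp [e, hlj]
    rw [Finset.sum_congr rfl (fun i _ => this i), Finset.mul_sum]
    apply Finset.sum_congr rfl; intro i _; rw [hs i j]; ring
  have hD : ∑ i, ∑ l, e i * θ.1 i l * e l = 0 := by
    apply Finset.sum_eq_zero; intro i _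
    apply Finset.sum_eq_zero; intro l _
    by_cases h1 : i = j <;> by_cases h2 : l = j <;> simp [e, h1, h2, hdg]
  have hb : ∑ l, θ.2 l * (x l + e l) = (∑ l, θ.2 l * x l) + θ.2 j * d := by
    simp only [mul_add, Finset.sum_add_distrib]
    congr 1
    rw [Finset.sum_eq_single_of_mem j (Finset.mem_univ j)]
    · simp [e]
    · intro l _ hlj; simp [e, hlj]
  rw [energy, energy, hy]
  simp only [expand, Finset.sum_add_distrib]
  rw [hB, hC, hD, hb]
  ring

lemma card_mem_le (a : Fin v) :
    (Finset.univ.filter (fun l : Fin n => a ∈ (Ind.symm l : Sym2 (Fin v)))).card ≤ v := by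
  classical
  have hv : ((Finset.univ : Finset (Fin v))).card = v := by simp
  refine le_trans ?_ hv.le
  apply Finset.card_le_card_of_injOn
    (fun l => if h : a ∈ (Ind.symm l : Sym2 (Fin v)) then Sym2.Mem.other' h else a)
  · intro l _; exact Finset.mem_univ _
  · intro l hl l' hl' h
    rw [Finset.mem_coe, Finset.mem_filter] at hl hl'
    simp only [hl.2, hl'.2, dif_pos] at h
    apply symm_inj Ind
    rw [← Sym2.other_spec' hl.2, ← Sym2.other_spec' hl'.2, h]

lemma card_adj_le (j : Fin n) :
    (Finset.univ.filter (fun l : Fin n => edgeAdj Ind j l)).card ≤ 2 * v := by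
  classical
  obtain ⟨a, b, hab, hj⟩ := exists_pair Ind j
  have hsub : (Finset.univ.filter (fun l : Fin n => edgeAdj Ind j l)) ⊆
      (Finset.univ.filter (fun l : Fin n => a ∈ (Ind.symm l : Sym2 (Fin v)))) ∪
        (Finset.univ.filter (fun l : Fin n => b ∈ (Ind.symm l : Sym2 (Fin v)))) := by
    intro l hl
    rw [Finset.mem_filter] at hl
    obtain ⟨-, hadj⟩ := hl
    unfold edgeAdj at hadj
    rw [Finset.card_eq_one] at hadj
    obtain ⟨c, hc⟩ := hadj
    have hcmem : c ∈ pairFinset Ind j ∩ pairFinset Ind l := by rw [hc]; simp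
    rw [Finset.mem_inter, pairFinset_eq Ind hj] at hcmem
    obtain ⟨hcab, hcl⟩ := hcmem
    have hclmem : c ∈ (Ind.symm l : Sym2 (Fin v)) := by simpa [pairFinset] using hcl
    rw [Finset.mem_union, Finset.mem_filter, Finset.mem_filter]
    rcases Finset.mem_insert.1 hcab with rfl | hcb
    · exact Or.inl ⟨Finset.mem_univ _, hclmem⟩
    · rw [Finset.mem_singleton] at hcb; subst hcb
      exact Or.inr ⟨Finset.mem_univ _, hclmem⟩
  calc (Finset.univ.filter (fun l : Fin n => edgeAdj Ind j l)).card
      ≤ _ := Finset.card_le_card hsub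
    _ ≤ _ + _ := Finset.card_union_le _ _
    _ ≤ v + v := Nat.add_le_add (card_mem_le Ind a) (card_mem_le Ind b)
    _ = 2 * v := by ring

lemma n_eq_choose (e : EdgeIdx v ≃ Fin n) : n = v.choose 2 := by
  classical
  have h1 : Fintype.card (Fin n) = Fintype.card (EdgeIdx v) :=
    (Fintype.card_congr e.symm)
  rw [Fintype.card_fin] at h1
  rw [h1]
  have := Sym2.card_subtype_not_diag (α := Fin v)
  rw [Fintype.card_fin] at this
  convert this using 2

end Aux

set_option maxHeartbeats 1600000 in
/-- With `θ = F(−5/k, 14/k², 0)` and `16 ≤ k ≤ v`: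
(1) all energy gaps on `C_{v,k}` are at least 1, and
(2) if `k = c·v` with `c ∈ (0,1]` then `‖θ‖² ≤ (196·c⁻⁴ + 50·c⁻²)·v`. -/
theorem Fmap_clique_lowNorm {v n : ℕ} (Ind : EdgeIdx v ≃ Fin n) (k : ℕ)
    (hk : 16 ≤ k) (hkv : k ≤ v) (θ : Param n)
    (hθ : θ = Fmap Ind (-5 / (k : ℝ), 14 / (k : ℝ) ^ 2, 0)) :
    (∀ x ∈ CliqueReps Ind k, ∀ j : Fin n,
        energy (flip x j) θ - energy x θ ≥ 1) ∧
    (∀ c : ℝ, 0 < c → c ≤ 1 → (k : ℝ) = c * v →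
        pInner θ θ ≤ (196 * c⁻¹ ^ 4 + 50 * c⁻¹ ^ 2) * v) := by
  classical
  have hkR : (16:ℝ) ≤ (k:ℝ) := by exact_mod_cast hk
  have hkpos : (0:ℝ) < (k:ℝ) := by linarith
  have hkne : (k:ℝ) ≠ 0 := ne_of_gt hkpos
  set β1 : ℝ := -5 / (k:ℝ) with hβ1
  set β2 : ℝ := 14 / (k:ℝ) ^ 2 with hβ2
  subst hθ
  have hW : ∀ i l : Fin n, (Fmap Ind (β1, β2, (0:ℝ))).1 i l
      = if i = l then 0 else if edgeAdj Ind i l then β1 else β2 := fun _ _ => rfl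
  have hb0 : ∀ l : Fin n, (Fmap Ind (β1, β2, (0:ℝ))).2 l = 0 := fun _ => rfl
  have hsymm : ∀ i l, (Fmap Ind (β1, β2, (0:ℝ))).1 i l
      = (Fmap Ind (β1, β2, (0:ℝ))).1 l i := by
    intro i l
    rw [hW, hW]
    by_cases h : i = l
    · subst h; rfl
    · rw [if_neg h, if_neg (Ne.symm h)]
      by_cases hadj : edgeAdj Ind i l
      · rw [if_pos hadj, if_pos (edgeAdj_symm Ind hadj)]
      · rw [if_neg hadj, if_neg (fun hl => hadj (edgeAdj_symm Ind hl))]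
  have hdiag : ∀ i, (Fmap Ind (β1, β2, (0:ℝ))).1 i i = 0 := by
    intro i; rw [hW]; simp
  constructor
  · rintro x ⟨K, hKcard, rfl⟩ j
    rw [ge_iff_le, energy_flip_sub _ hsymm hdiag, hb0]
    set T := cliqueSet Ind K with hT
    have hxval : ∀ l, cliqueRep Ind K l = if l ∈ T then 1 else 0 := by
      intro l
      by_cases h : ∀ a ∈ (Ind.symm l : Sym2 (Fin v)), a ∈ K
      · rw [cliqueRep]
        rw [if_pos h, if_pos (by rw [hT, mem_cliqueSet]; exact h)]
      · rw [cliqueRep]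
        rw [if_neg h, if_neg (by rw [hT, mem_cliqueSet]; exact h)]
    set A := ((T.erase j).filter (fun l => edgeAdj Ind j l)).card with hA
    set B := ((T.erase j).filter (fun l => ¬ edgeAdj Ind j l)).card with hB
    have hsum : (∑ l, (Fmap Ind (β1, β2, (0:ℝ))).1 j l * cliqueRep Ind K l)
        = A * β1 + B * β2 := by
      have h1 : ∀ l, (Fmap Ind (β1, β2, (0:ℝ))).1 j l * cliqueRep Ind K l
          = if l ∈ T then (Fmap Ind (β1, β2, (0:ℝ))).1 j l else 0 := by
        intro l; rw [hxval l]; by_cases h : l ∈ T <;> simp [h]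
      rw [Finset.sum_congr rfl (fun l _ => h1 l), Finset.sum_ite_mem, Finset.univ_inter,
        ← Finset.sum_erase T (hdiag j),
        ← Finset.sum_filter_add_sum_filter_not (T.erase j) (fun l => edgeAdj Ind j l)]
      have t1 : ∑ l ∈ (T.erase j).filter (fun l => edgeAdj Ind j l),
          (Fmap Ind (β1, β2, (0:ℝ))).1 j l = A * β1 := by
        rw [Finset.sum_congr rfl (fun l hl => ?_), Finset.sum_const, nsmul_eq_mul]
        rw [Finset.mem_filter, Finset.mem_erase] at hl
        rw [hW, if_neg (Ne.symm hl.1.1), if_pos hl.2]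
      have t2 : ∑ l ∈ (T.erase j).filter (fun l => ¬ edgeAdj Ind j l),
          (Fmap Ind (β1, β2, (0:ℝ))).1 j l = B * β2 := by
        rw [Finset.sum_congr rfl (fun l hl => ?_), Finset.sum_const, nsmul_eq_mul]
        rw [Finset.mem_filter, Finset.mem_erase] at hl
        rw [hW, if_neg (Ne.symm hl.1.1), if_neg hl.2]
      rw [t1, t2]
    rw [hsum]
    obtain ⟨a, b, hab, hj⟩ := exists_pair Ind j
    have hc2 : ((k.choose 2 : ℕ) : ℝ) = (k:ℝ) * ((k:ℝ) - 1) / 2 := Nat.cast_choose_two ℝ k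
    have hBr : (0:ℝ) ≤ (B:ℝ) := Nat.cast_nonneg B
    by_cases hjT : j ∈ T
    · -- x j = 1 : flipping an edge of the clique off
      have hxj : cliqueRep Ind K j = 1 := by rw [hxval, if_pos hjT]
      rw [hxj]
      have hmem := (mem_cliqueSet Ind).1 hjT
      have haK : a ∈ K := hmem a (by rw [hj]; simp)
      have hbK : b ∈ K := hmem b (by rw [hj]; simp)
      have hAlow : 2 * (k - 2) ≤ A := by
        have := countA_low Ind hab hj haK hbK
        rwa [hKcard] at this
      have hABn : A + B + 1 = k.choose 2 := by
        have h1 : A + B = (T.erase j).card :=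
          Finset.card_filter_add_card_filter_not _
        have h2 : (T.erase j).card = T.card - 1 := Finset.card_erase_of_mem hjT
        have h3 : 0 < T.card := Finset.card_pos.mpr ⟨j, hjT⟩
        have h4 : T.card = k.choose 2 := by rw [hT, card_cliqueSet, hKcard]
        omega
      have hABr : (A:ℝ) + (B:ℝ) + 1 = (k:ℝ) * ((k:ℝ) - 1) / 2 := by
        rw [← hc2]; exact_mod_cast congrArg (Nat.cast : ℕ → ℝ) hABn
      have hAr : 2 * ((k:ℝ) - 2) ≤ (A:ℝ) := by
        have h5 : ((2 * (k - 2) : ℕ) : ℝ) ≤ (A:ℝ) := Nat.cast_le.2 hAlow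
        rw [Nat.cast_mul, Nat.cast_sub (by omega : 2 ≤ k)] at h5
        push_cast at h5 ⊢
        linarith
      have hgoal : (1 - 2 * (1:ℝ)) * (((A:ℝ) * β1 + (B:ℝ) * β2) + 0)
          = (5 * (A:ℝ) * (k:ℝ) - 14 * (B:ℝ)) / (k:ℝ)^2 := by
        rw [hβ1, hβ2]; field_simp; ring
      rw [hgoal, le_div_iff₀ (by positivity)]
      nlinarith [hAr, hBr, hABr, hkR]
    · -- x j = 0 : flipping an edge on
      have hxj : cliqueRep Ind K j = 0 := by rw [hxval, if_neg hjT]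
      rw [hxj]
      have herase : T.erase j = T := Finset.erase_eq_of_notMem hjT
      have hABn : A + B = k.choose 2 := by
        have h1 : A + B = (T.erase j).card :=
          Finset.card_filter_add_card_filter_not _
        have h4 : T.card = k.choose 2 := by rw [hT, card_cliqueSet, hKcard]
        rw [herase] at h1
        omega
      have hABr : (A:ℝ) + (B:ℝ) = (k:ℝ) * ((k:ℝ) - 1) / 2 := by
        rw [← hc2]; exact_mod_cast congrArg (Nat.cast : ℕ → ℝ) hABn
      have hnotboth : ¬ (a ∈ K ∧ b ∈ K) := by
        rintro ⟨haK, hbK⟩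
        apply hjT
        rw [hT, mem_cliqueSet]
        intro cc hcc
        rw [hj, Sym2.mem_iff] at hcc
        rcases hcc with rfl | rfl
        · exact haK
        · exact hbK
      have main : ∀ (hAup : A ≤ k - 1), (1:ℝ) ≤ (1 - 2*0) * (((A:ℝ) * β1 + (B:ℝ) * β2) + 0) := by
        intro hAup
        have hAr : (A:ℝ) ≤ (k:ℝ) - 1 := by
          have h5 : ((A:ℕ):ℝ) ≤ ((k - 1 : ℕ):ℝ) := Nat.cast_le.2 hAup
          rw [Nat.cast_sub (by omega : 1 ≤ k)] at h5
          push_cast at h5 ⊢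
          linarith
        have hgoal : (1 - 2*(0:ℝ)) * (((A:ℝ) * β1 + (B:ℝ) * β2) + 0)
            = (14 * (B:ℝ) - 5 * (A:ℝ) * (k:ℝ)) / (k:ℝ)^2 := by
          rw [hβ1, hβ2]; field_simp; ring
        rw [hgoal, le_div_iff₀ (by positivity)]
        nlinarith [hAr, hBr, hABr, hkR, (Nat.cast_nonneg A : (0:ℝ) ≤ (A:ℝ))]
      by_cases haK : a ∈ K <;> by_cases hbK : b ∈ K
      · exact absurd ⟨haK, hbK⟩ hnotboth
      · -- a ∈ K, b ∉ K
        apply main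
        have := countA_up Ind hab hj haK hbK
        rw [hKcard] at this
        rw [hA, herase]
        exact this
      · -- b ∈ K, a ∉ K
        apply main
        have hj' : (Ind.symm j : Sym2 (Fin v)) = s(b, a) := by rw [hj, Sym2.eq_swap]
        have := countA_up Ind (Ne.symm hab) hj' hbK haK
        rw [hKcard] at this
        rw [hA, herase]
        exact this
      · -- a ∉ K, b ∉ K
        have hAzero : A = 0 := by
          rw [hA, herase, countA_zero Ind hj haK hbK, Finset.card_empty]
        have hBr2 : (B:ℝ) = (k:ℝ) * ((k:ℝ) - 1) / 2 := by
          rw [← hABr, hAzero]; push_cast; ring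
        have hgoal : (1 - 2*(0:ℝ)) * (((A:ℝ) * β1 + (B:ℝ) * β2) + 0)
            = (14 * (B:ℝ) - 5 * (A:ℝ) * (k:ℝ)) / (k:ℝ)^2 := by
          rw [hβ1, hβ2]; field_simp; ring
        rw [hgoal, le_div_iff₀ (by positivity), hAzero]
        push_cast
        nlinarith [hBr2, hkR]
  · -- Part 2 : low norm
    intro c hc0 hc1 hkc
    have hvR : (16:ℝ) ≤ (v:ℝ) := by
      have : (k:ℝ) ≤ (v:ℝ) := by exact_mod_cast hkv
      linarith
    have hvpos : (0:ℝ) < (v:ℝ) := by linarith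
    have hnR : (n:ℝ) ≤ (v:ℝ)^2 / 2 := by
      have h1 : n = v.choose 2 := n_eq_choose Ind
      have h2 : ((v.choose 2 : ℕ):ℝ) = (v:ℝ) * ((v:ℝ) - 1) / 2 := Nat.cast_choose_two ℝ v
      rw [h1, h2]
      nlinarith [hvpos]
    have hn0 : (0:ℝ) ≤ (n:ℝ) := Nat.cast_nonneg n
    have hrow : ∀ i : Fin n, ∑ l, (Fmap Ind (β1, β2, (0:ℝ))).1 i l
          * (Fmap Ind (β1, β2, (0:ℝ))).1 i l
        ≤ 2 * (v:ℝ) * β1^2 + (n:ℝ) * β2^2 := by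
      intro i
      rw [← Finset.sum_filter_add_sum_filter_not Finset.univ (fun l => edgeAdj Ind i l)]
      have t1 : ∑ l ∈ Finset.univ.filter (fun l => edgeAdj Ind i l),
          (Fmap Ind (β1, β2, (0:ℝ))).1 i l * (Fmap Ind (β1, β2, (0:ℝ))).1 i l
          ≤ 2 * (v:ℝ) * β1^2 := by
        have heq : ∀ l ∈ Finset.univ.filter (fun l => edgeAdj Ind i l),
            (Fmap Ind (β1, β2, (0:ℝ))).1 i l * (Fmap Ind (β1, β2, (0:ℝ))).1 i l = β1^2 := by
          intro l hl
          rw [Finset.mem_filter] at hl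
          have hne : i ≠ l := by
            rintro rfl
            exact edgeAdj_irrefl Ind i hl.2
          rw [hW, if_neg hne, if_pos hl.2, sq]
        rw [Finset.sum_congr rfl heq, Finset.sum_const, nsmul_eq_mul]
        have hcard : ((Finset.univ.filter (fun l => edgeAdj Ind i l)).card : ℝ)
            ≤ 2 * (v:ℝ) := by
          have := card_adj_le Ind i
          exact_mod_cast this
        exact mul_le_mul_of_nonneg_right hcard (sq_nonneg β1)
      have t2 : ∑ l ∈ Finset.univ.filter (fun l => ¬ edgeAdj Ind i l),
          (Fmap Ind (β1, β2, (0:ℝ))).1 i l * (Fmap Ind (β1, β2, (0:ℝ))).1 i l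
          ≤ (n:ℝ) * β2^2 := by
        have hbound : ∀ l ∈ Finset.univ.filter (fun l => ¬ edgeAdj Ind i l),
            (Fmap Ind (β1, β2, (0:ℝ))).1 i l * (Fmap Ind (β1, β2, (0:ℝ))).1 i l ≤ β2^2 := by
          intro l hl
          rw [Finset.mem_filter] at hl
          by_cases hil : i = l
          · rw [hW, if_pos hil]; simp [sq_nonneg]
          · rw [hW, if_neg hil, if_neg hl.2, sq]
        calc ∑ l ∈ Finset.univ.filter (fun l => ¬ edgeAdj Ind i l),
            (Fmap Ind (β1, β2, (0:ℝ))).1 i l * (Fmap Ind (β1, β2, (0:ℝ))).1 i l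
            ≤ ((Finset.univ.filter (fun l => ¬ edgeAdj Ind i l)).card : ℝ) * β2^2 := by
              have := Finset.sum_le_card_nsmul
                (Finset.univ.filter (fun l => ¬ edgeAdj Ind i l)) _ (β2^2) hbound
              rwa [nsmul_eq_mul] at this
          _ ≤ (n:ℝ) * β2^2 := by
              have h1 : (Finset.univ.filter (fun l => ¬ edgeAdj Ind i l)).card ≤ n := by
                calc (Finset.univ.filter (fun l => ¬ edgeAdj Ind i l)).card
                    ≤ (Finset.univ : Finset (Fin n)).card := Finset.card_filter_le _ _
                  _ = n := by simp
              have h2 : ((Finset.univ.filter (fun l => ¬ edgeAdj Ind i l)).card : ℝ)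
                  ≤ (n:ℝ) := by exact_mod_cast h1
              exact mul_le_mul_of_nonneg_right h2 (sq_nonneg β2)
      linarith
    have htot : pInner (Fmap Ind (β1, β2, (0:ℝ))) (Fmap Ind (β1, β2, (0:ℝ)))
        ≤ (n:ℝ) * (2 * (v:ℝ) * β1^2 + (n:ℝ) * β2^2) := by
      rw [pInner]
      have hb : ∑ l, (Fmap Ind (β1, β2, (0:ℝ))).2 l * (Fmap Ind (β1, β2, (0:ℝ))).2 l = 0 := by
        apply Finset.sum_eq_zero
        intro l _
        rw [hb0]
        ring
      rw [hb, add_zero]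
      have := Finset.sum_le_card_nsmul (Finset.univ : Finset (Fin n)) _
        (2 * (v:ℝ) * β1^2 + (n:ℝ) * β2^2) (fun i _ => hrow i)
      rwa [nsmul_eq_mul, Finset.card_univ, Fintype.card_fin] at this
    refine le_trans htot ?_
    have hβ1sq : β1^2 = 25 / (k:ℝ)^2 := by
      rw [hβ1, div_pow]; norm_num
    have hβ2sq : β2^2 = 196 / (k:ℝ)^4 := by
      rw [hβ2, div_pow]; norm_num [← pow_mul]
    rw [hβ1sq, hβ2sq, hkc]
    have hcvpos : (0:ℝ) < c * (v:ℝ) := by positivity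
    have key1 : (n:ℝ) * (2 * (v:ℝ) * (25 / (c * (v:ℝ))^2)) ≤ 50 * c⁻¹^2 * (v:ℝ) := by
      have e1 : (n:ℝ) * (2 * (v:ℝ) * (25 / (c * (v:ℝ))^2)) = 50 * (n:ℝ) / (c^2 * (v:ℝ)) := by
        field_simp
        ring
      have e2 : 50 * c⁻¹^2 * (v:ℝ) = 50 * (v:ℝ) / c^2 := by
        field_simp
      rw [e1, e2, div_le_div_iff₀ (by positivity) (by positivity)]
      have hc2 : (0:ℝ) < c^2 := by positivity
      have h3 : (n:ℝ) * c^2 ≤ ((v:ℝ)^2/2) * c^2 :=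
        mul_le_mul_of_nonneg_right hnR (le_of_lt hc2)
      calc 50 * (n:ℝ) * c^2
          = ((n:ℝ) * c^2) * 50 := by ring
        _ ≤ (((v:ℝ)^2/2) * c^2) * 50 := by
            apply mul_le_mul_of_nonneg_right h3
            norm_num
        _ ≤ 50 * (v:ℝ) * (c^2 * (v:ℝ)) := by
            nlinarith [mul_pos hc2 (mul_pos hvpos hvpos)]
    have key2 : (n:ℝ) * ((n:ℝ) * (196 / (c * (v:ℝ))^4)) ≤ 196 * c⁻¹^4 * (v:ℝ) := by
      have e1 : (n:ℝ) * ((n:ℝ) * (196 / (c * (v:ℝ))^4))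
          = 196 * (n:ℝ)^2 / (c^4 * (v:ℝ)^4) := by
        field_simp
      have e2 : 196 * c⁻¹^4 * (v:ℝ) = 196 * (v:ℝ) / c^4 := by
        field_simp
      rw [e1, e2, div_le_div_iff₀ (by positivity) (by positivity)]
      have hv5 : (v:ℝ)^4 ≤ (v:ℝ)^5 := by
        nlinarith [pow_pos hvpos 4, hvR]
      have hnsq : (n:ℝ)^2 ≤ (v:ℝ)^4 / 4 := by nlinarith [hnR, hn0]
      have hc4 : (0:ℝ) < c^4 := by positivity
      nlinarith [mul_le_mul_of_nonneg_left hv5 (le_of_lt hc4),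
        mul_le_mul_of_nonneg_left hnsq (le_of_lt hc4)]
    nlinarith [key1, key2, hn0, hnR]

end HopfieldPaper
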